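/- Let 0 < c < 1/2. There exists R₀ ∈ (0, 1) such that for every R ∈ (R₀, 1) the following holds: setting A = √(c/2)·(1/R − R) and B = √(c/2)·(R + 1/R), for every point w = −A·sin θ + i·B·cos θ (θ ∈ [0, 2π)) on the ellipse E_R = J(i·Γ_R) (the image of the circle of radius R under u ↦ √(c/2)·(u − 1/u) precomposed with multiplication by i), the point 1/w lies strictly outside the closed region bounded by E_R, i.e. (Re(1/w))²/A² + (Im(1/w))²/B² > 1. -/

import Mathlib

set_option maxHeartbeats 1000000 in
theorem stmt19 (c : ℝ) (hc0 : 0 < c) (hc : c < 1/2) :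
    ∃ R₀ : ℝ, 0 < R₀ ∧ R₀ < 1 ∧
      ∀ R : ℝ, R₀ < R → R < 1 →
        ∀ θ : ℝ, 0 ≤ θ → θ < 2*Real.pi →
          ∀ w : ℂ,
            w = ((-(Real.sqrt (c/2) * (1/R - R) * Real.sin θ) : ℝ) : ℂ)
                  + Complex.I * ((Real.sqrt (c/2) * (R + 1/R) * Real.cos θ : ℝ) : ℂ) →
            ((1/w).re)^2 / (Real.sqrt (c/2) * (1/R - R))^2
                + ((1/w).im)^2 / (Real.sqrt (c/2) * (R + 1/R))^2 > 1 := by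
  have hc2 : (0:ℝ) < c/2 := by linarith
  set s := Real.sqrt (c/2) with hsdef
  have hs0 : 0 < s := Real.sqrt_pos.mpr hc2
  have hs2 : s^2 = c/2 := Real.sq_sqrt hc2.le
  set t := Real.sqrt (2/c) with htdef
  have ht2 : (2:ℝ) < t := by
    rw [htdef]
    rw [show (2:ℝ) < Real.sqrt (2/c) ↔ (2:ℝ)^2 < 2/c from
      Real.lt_sqrt (by norm_num)]
    rw [lt_div_iff₀ hc0]; linarith
  have hst : s * t = 1 := by
    rw [hsdef, htdef, ← Real.sqrt_mul hc2.le]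
    rw [show c/2 * (2/c) = 1 by field_simp]
    exact Real.sqrt_one
  clear_value s t
  refine ⟨1/(t-1), div_pos one_pos (by linarith), ?_, ?_⟩
  · rw [div_lt_one (by linarith)]; linarith
  intro R hR0 hR1 θ _ _ w hw
  have hRpos : 0 < R := lt_trans (div_pos one_pos (by linarith)) hR0
  have hinvR : 1/R < t - 1 := by
    rw [div_lt_iff₀ hRpos]
    have h1 : 1/(t-1) < R := hR0
    rw [div_lt_iff₀ (by linarith)] at h1
    nlinarith
  have hR1R : 1 < 1/R := by rw [lt_div_iff₀ hRpos]; linarith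
  set A := s * (1/R - R) with hA
  set B := s * (R + 1/R) with hB
  have hA0 : 0 < A := by apply mul_pos hs0; linarith
  have hB0 : 0 < B := by apply mul_pos hs0; linarith
  have hAB : A < B := by
    apply mul_lt_mul_of_pos_left _ hs0; linarith
  have hBlt1 : B < 1 := by
    have hRt : R + 1/R < t := by linarith
    calc B < s * t := mul_lt_mul_of_pos_left hRt hs0
    _ = 1 := hst
  clear_value A B
  set a : ℝ := -(A * Real.sin θ) with ha
  set b : ℝ := B * Real.cos θ with hb
  have hwre : w.re = a := by
    rw [hw]
    simp only [Complex.add_re, Complex.mul_re, Complex.ofReal_re,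
      Complex.ofReal_im, Complex.I_re, Complex.I_im]
    ring
  have hwim : w.im = b := by
    rw [hw]
    simp only [Complex.add_im, Complex.mul_im, Complex.ofReal_re,
      Complex.ofReal_im, Complex.I_re, Complex.I_im]
    ring
  clear_value a b
  set D := a^2 + b^2 with hD
  have hsc := Real.sin_sq_add_cos_sq θ
  have hDval : D = A^2 * Real.sin θ^2 + B^2 * Real.cos θ^2 := by
    rw [hD, ha, hb]; ring
  clear_value D
  have hA2B2 : A^2 ≤ B^2 := by nlinarith
  have hDpos : 0 < D := by
    rw [hDval]
    nlinarith [mul_le_mul_of_nonneg_right hA2B2 (sq_nonneg (Real.cos θ)),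
      mul_pos hA0 hA0]
  have hDlt1 : D < 1 := by
    rw [hDval]
    nlinarith [mul_le_mul_of_nonneg_right hA2B2 (sq_nonneg (Real.sin θ)),
      mul_pos hB0 hB0]
  have hnormSq : Complex.normSq w = D := by
    rw [Complex.normSq_apply, hwre, hwim, hD]; ring
  have hre : (1/w).re = a / D := by
    rw [one_div, Complex.inv_re, hwre, hnormSq]
  have him : (1/w).im = -b / D := by
    rw [one_div, Complex.inv_im, hwim, hnormSq]
  have hAne : A ≠ 0 := hA0.ne'
  have hBne : B ≠ 0 := hB0.ne'
  have hDne : D ≠ 0 := hDpos.ne'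
  rw [hre, him]
  have key : (a/D)^2/A^2 + (-b/D)^2/B^2 = 1/D^2 := by
    have h1 : (a/D)^2/A^2 = Real.sin θ^2 / D^2 := by
      rw [ha]; field_simp
    have h2 : (-b/D)^2/B^2 = Real.cos θ^2 / D^2 := by
      rw [hb]; field_simp
    rw [h1, h2, ← add_div, hsc]
  rw [key]
  have hD2 : D^2 < 1 := by nlinarith
  rw [gt_iff_lt, lt_div_iff₀ (by positivity)]
  linarith
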